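/- Let f : ℂ → ℂ be an SD map that preserves ℝ (i.e., f(x) is real for every real x). Then exactly one of the following holds: (1) f(z/z̄) = z/z̄ and f(z²) = z² for all nonzero complex z; or (2) f(z/z̄) = z̄/z and f(z²) = z̄² for all nonzero complex z. Here z̄ denotes the complex conjugate of z. -/

import Mathlib

open Complex

/-- A function `f : F → F` on a field `F` is an *SD map* if for all `x ≠ y` one has
`f x ≠ f y` and `f ((x+y)/(x-y)) = (f x + f y) / (f x - f y)`. -/
def IsSDMap {F : Type*} [Field F] (f : F → F) : Prop :=
  ∀ ⦃x y : F⦄, x ≠ y →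
    f x ≠ f y ∧ f ((x + y) / (x - y)) = (f x + f y) / (f x - f y)

namespace SDAux

variable {f : ℂ → ℂ}



lemma one (hf : IsSDMap f) : f 1 = 1 := by
  have h1 := (hf (show (1:ℂ) ≠ 0 by norm_num)).2
  have h2 := (hf (show (2:ℂ) ≠ 0 by norm_num)).2
  have d1 : f 1 - f 0 ≠ 0 := sub_ne_zero.mpr (hf (show (1:ℂ) ≠ 0 by norm_num)).1
  have d2 : f 2 - f 0 ≠ 0 := sub_ne_zero.mpr (hf (show (2:ℂ) ≠ 0 by norm_num)).1
  have h12 : f 2 ≠ f 1 := (hf (show (2:ℂ) ≠ 1 by norm_num)).1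
  norm_num at h1 h2
  rw [eq_div_iff d1] at h1
  rw [eq_div_iff d2] at h2
  have hb : (f 1 - 1) * (f 1 - f 2) = 0 := by linear_combination h1 - h2
  rcases mul_eq_zero.mp hb with h | h
  · linear_combination h
  · exact absurd (sub_eq_zero.mp h).symm h12

lemma zero (hf : IsSDMap f) : f 0 = 0 := by
  have h1 := (hf (show (1:ℂ) ≠ 0 by norm_num)).2
  have d1 : f 1 - f 0 ≠ 0 := sub_ne_zero.mpr (hf (show (1:ℂ) ≠ 0 by norm_num)).1
  norm_num at h1
  rw [eq_div_iff d1, one hf] at h1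
  linear_combination (-1/2 : ℂ) * h1

lemma inj (hf : IsSDMap f) : Function.Injective f := by
  intro x y h
  by_contra hxy
  exact (hf hxy).1 h

lemma ne_zero (hf : IsSDMap f) {x : ℂ} (hx : x ≠ 0) : f x ≠ 0 := by
  intro h
  exact hx (inj hf (h.trans (zero hf).symm))

lemma neg (hf : IsSDMap f) (x : ℂ) : f (-x) = - f x := by
  by_cases hx : x = 0
  · simp [hx, zero hf]
  have hxx : x ≠ -x := by
    intro h
    exact hx (add_self_eq_zero.mp (by linear_combination h))
  have h := (hf hxx).2
  have d : f x - f (-x) ≠ 0 := sub_ne_zero.mpr (hf hxx).1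
  rw [show (x + -x) / (x - -x) = 0 by ring_nf, zero hf] at h
  have := (div_eq_zero_iff.mp h.symm).resolve_right d
  linear_combination this



lemma c_const (hf : IsSDMap f) {x y : ℂ} (hx : x ≠ 0) (hy : y ≠ 0) (hxy : x ≠ y) :
    f x * f x⁻¹ = f y * f y⁻¹ := by
  have hne : y⁻¹ ≠ x⁻¹ := fun h => hxy ((inv_inj.mp h).symm)
  have h1 := (hf hxy).2
  have h2 := (hf hne).2
  have hxy' : x - y ≠ 0 := sub_ne_zero.mpr hxy
  have harg : (y⁻¹ + x⁻¹) / (y⁻¹ - x⁻¹) = (x + y) / (x - y) := by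
    rw [div_eq_div_iff (sub_ne_zero.mpr hne) hxy']
    field_simp
  rw [harg, h1] at h2
  have d1 : f x - f y ≠ 0 := sub_ne_zero.mpr (hf hxy).1
  have d2 : f y⁻¹ - f x⁻¹ ≠ 0 := sub_ne_zero.mpr (hf hne).1
  rw [div_eq_div_iff d1 d2] at h2
  linear_combination (-1/2 : ℂ) * h2

lemma inv (hf : IsSDMap f) {x : ℂ} (hx : x ≠ 0) : f x⁻¹ = (f x)⁻¹ := by
  by_cases hx1 : x = 1
  · simp [hx1, one hf]
  have h := c_const hf hx one_ne_zero hx1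
  rw [inv_one, one hf, mul_one] at h
  exact ((inv_eq_of_mul_eq_one_right h).symm)

lemma mul (hf : IsSDMap f) (x y : ℂ) : f (x * y) = f x * f y := by
  by_cases hy : y = 0
  · simp [hy, zero hf]
  by_cases hx1 : x = 1
  · simp [hx1, one hf]
  have hxy : x * y ≠ y := fun h => hx1 (mul_right_cancel₀ hy (by rw [one_mul]; exact h))
  have h1 := (hf hxy).2
  have h2 := (hf (show x ≠ 1 from hx1)).2
  have hx1' : x - 1 ≠ 0 := sub_ne_zero.mpr hx1
  have harg : (x * y + y) / (x * y - y) = (x + 1) / (x - 1) := by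
    rw [div_eq_div_iff (by rw [show x*y - y = (x-1)*y by ring]; exact mul_ne_zero hx1' hy) hx1']
    ring
  rw [harg, h2, one hf] at h1
  have d1 : f (x*y) - f y ≠ 0 := sub_ne_zero.mpr (hf hxy).1
  have d2 : f x - 1 ≠ 0 := by
    rw [← one hf]; exact sub_ne_zero.mpr (hf (show x ≠ 1 from hx1)).1
  rw [div_eq_div_iff d2 d1] at h1
  linear_combination (1/2 : ℂ) * h1

lemma div (hf : IsSDMap f) (x y : ℂ) : f (x / y) = f x / f y := by
  by_cases hy : y = 0
  · simp [hy, zero hf]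
  rw [div_eq_mul_inv, mul hf, inv hf hy, div_eq_mul_inv]

lemma fsq (hf : IsSDMap f) (x : ℂ) : f (x ^ 2) = f x ^ 2 := by
  rw [sq, mul hf, sq]

lemma mid (hf : IsSDMap f) {u v : ℂ} (hu : u ≠ 0) (hv : v ≠ 0) :
    f u + f v = 2 * f ((u + v) / 2) := by
  obtain ⟨p, hp⟩ : ∃ p : ℂ, p ^ 2 = u :=
    ⟨u ^ (((2:ℕ):ℂ))⁻¹, Complex.cpow_nat_inv_pow u (by norm_num)⟩
  obtain ⟨q, hq⟩ : ∃ q : ℂ, q ^ 2 = v :=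
    ⟨v ^ (((2:ℕ):ℂ))⁻¹, Complex.cpow_nat_inv_pow v (by norm_num)⟩
  have hp0 : p ≠ 0 := fun h => hu (by rw [← hp, h]; ring)
  have hq0 : q ≠ 0 := fun h => hv (by rw [← hq, h]; ring)
  have hxy : (p + q)/2 ≠ (p - q)/2 := by
    intro h; exact hq0 (by linear_combination h)
  have hxy2 : ((p + q)/2) ^ 2 ≠ ((p - q)/2) ^ 2 := by
    intro h
    have hpq : p * q = 0 := by linear_combination h
    exact (mul_ne_zero hp0 hq0) hpq
  have h1 := (hf hxy).2
  have h2 := (hf hxy2).2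
  have e1 : ((p + q)/2 + (p - q)/2) / ((p + q)/2 - (p - q)/2) = p / q := by
    rw [div_eq_div_iff (sub_ne_zero.mpr hxy) hq0]; ring
  have e2 : (((p + q)/2) ^ 2 + ((p - q)/2) ^ 2) / (((p + q)/2) ^ 2 - ((p - q)/2) ^ 2)
      = ((u + v) / 2) / (p * q) := by
    rw [div_eq_div_iff (sub_ne_zero.mpr hxy2) (mul_ne_zero hp0 hq0), ← hp, ← hq]; ring
  rw [e1, div hf] at h1
  rw [e2, div hf, mul hf, fsq hf, fsq hf] at h2
  have dxy : f ((p + q)/2) - f ((p - q)/2) ≠ 0 := sub_ne_zero.mpr (hf hxy).1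
  have dxy2 : f ((p + q)/2) ^ 2 - f ((p - q)/2) ^ 2 ≠ 0 := by
    have := sub_ne_zero.mpr (hf hxy2).1
    rwa [fsq hf, fsq hf] at this
  have dp : f p ≠ 0 := ne_zero hf hp0
  have dq : f q ≠ 0 := ne_zero hf hq0
  rw [div_eq_div_iff dq dxy] at h1
  rw [div_eq_div_iff (mul_ne_zero dp dq) dxy2] at h2
  set a := f ((p + q)/2)
  set b := f ((p - q)/2)
  set A := f p
  set B := f q
  set M := f ((u + v)/2)
  -- h1 : A * (a - b) = (a + b) * B
  -- h2 : M * (a^2 - b^2) = (a^2 + b^2) * (A * B)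
  have hfu : f u = A ^ 2 := by rw [← hp, fsq hf]
  have hfv : f v = B ^ 2 := by rw [← hq, fsq hf]
  rw [hfu, hfv]
  have hprod : (A ^ 2 + B ^ 2 - 2 * M) * (a ^ 2 - b ^ 2) = 0 := by
    linear_combination (A * (a + b) - B * (a - b)) * h1 - 2 * h2
  rcases mul_eq_zero.mp hprod with h | h
  · linear_combination h
  · exact absurd h dxy2

lemma double (hf : IsSDMap f) {t : ℂ} (ht : t ≠ 0) : f (2 * t) = 2 * f t := by
  have h3 : (3 : ℂ) * t ≠ 0 := mul_ne_zero (by norm_num) ht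
  have hm1 := mid hf h3 (neg_ne_zero.mpr ht)
  rw [neg hf, show ((3:ℂ) * t + -t) / 2 = t by ring] at hm1
  -- hm1 : f (3t) - f t = 2 f t
  have hm2 := mid hf h3 ht
  rw [show ((3:ℂ) * t + t) / 2 = 2 * t by ring] at hm2
  linear_combination (-1/2 : ℂ) * hm2 + (1/2 : ℂ) * hm1

lemma add (hf : IsSDMap f) (u v : ℂ) : f (u + v) = f u + f v := by
  by_cases hu : u = 0
  · simp [hu, zero hf]
  by_cases hv : v = 0
  · simp [hv, zero hf]
  by_cases huv : u + v = 0
  · have : v = -u := by linear_combination huv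
    rw [huv, this, neg hf, zero hf]; ring
  have h := mid hf hu hv
  have hd := double hf (show (u + v) / 2 ≠ 0 by
    intro h0; exact huv (by linear_combination 2 * h0))
  rw [show 2 * ((u + v)/2) = u + v by ring] at hd
  rw [hd, ← h]



lemma real_fix (hf : IsSDMap f) (hR : ∀ x : ℝ, ∃ r : ℝ, f (x : ℂ) = (r : ℂ)) :
    ∀ x : ℝ, f (x : ℂ) = (x : ℂ) := by
  choose r hrspec using hR
  have key : ∀ x : ℝ, ((r x : ℝ) : ℂ) = f (x : ℂ) := fun x => (hrspec x).symm
  let g : ℝ →+* ℝ :=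
    { toFun := r
      map_one' := by
        have : ((r 1 : ℝ) : ℂ) = ((1 : ℝ) : ℂ) := by rw [key]; push_cast; exact one hf
        exact_mod_cast this
      map_mul' := by
        intro x y
        have : ((r (x * y) : ℝ) : ℂ) = ((r x * r y : ℝ) : ℂ) := by
          push_cast
          rw [key, key, key]
          push_cast
          exact mul hf x y
        exact_mod_cast this
      map_zero' := by
        have : ((r 0 : ℝ) : ℂ) = ((0 : ℝ) : ℂ) := by rw [key]; push_cast; exact zero hf
        exact_mod_cast this
      map_add' := by
        intro x y
        have : ((r (x + y) : ℝ) : ℂ) = ((r x + r y : ℝ) : ℂ) := by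
          push_cast
          rw [key, key, key]
          push_cast
          exact add hf x y
        exact_mod_cast this }
  have hg : g = RingHom.id ℝ := Subsingleton.elim _ _
  intro x
  have hx : r x = x := by
    have := DFunLike.congr_fun hg x
    exact this
  rw [← key x, hx]

lemma classify (hf : IsSDMap f) (hR : ∀ x : ℝ, ∃ r : ℝ, f (x : ℂ) = (r : ℂ)) :
    (∀ z : ℂ, f z = z) ∨ (∀ z : ℂ, f z = (starRingEnd ℂ) z) := by
  have hfix := real_fix hf hR
  have hI2 : f I * f I = -1 := by
    have h := mul hf I I
    rw [Complex.I_mul_I] at h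
    have hm1 : f (-1 : ℂ) = -1 := by
      have := hfix (-1 : ℝ); push_cast at this; exact this
    rw [hm1] at h
    exact h.symm
  have hcase : f I = I ∨ f I = -I := by
    have h : (f I - I) * (f I + I) = 0 := by
      linear_combination hI2 - Complex.I_sq
    rcases mul_eq_zero.mp h with h | h
    · left; linear_combination h
    · right; linear_combination h
  have hform : ∀ z : ℂ, f z = (z.re : ℂ) + (z.im : ℂ) * f I := by
    intro z
    conv_lhs => rw [← Complex.re_add_im z]
    rw [add hf, mul hf, hfix, hfix]
  rcases hcase with h | h
  · left; intro z; rw [hform, h, Complex.re_add_im]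
  · right; intro z
    rw [hform, h]
    apply Complex.ext <;> simp
end SDAux

theorem sd_map_complex_real_preserving_dichotomy (f : ℂ → ℂ) (hf : IsSDMap f)
    (hR : ∀ x : ℝ, ∃ r : ℝ, f (x : ℂ) = (r : ℂ)) :
    Xor'
      (∀ z : ℂ, z ≠ 0 →
        f (z / (starRingEnd ℂ) z) = z / (starRingEnd ℂ) z ∧ f (z ^ 2) = z ^ 2)
      (∀ z : ℂ, z ≠ 0 →
        f (z / (starRingEnd ℂ) z) = (starRingEnd ℂ) z / z ∧
          f (z ^ 2) = ((starRingEnd ℂ) z) ^ 2) := by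
  have h1I : (1 + I : ℂ) ≠ 0 := by
    intro h; have := congrArg Complex.re h; simpa using this
  have h1mI : (1 - I : ℂ) ≠ 0 := by
    intro h; have := congrArg Complex.re h; simpa using this
  have hconj1I : (starRingEnd ℂ) (1 + I) = 1 - I := by
    rw [map_add, map_one, Complex.conj_I]; ring
  have hdivI : ((1 : ℂ) + I) / (1 - I) = I := by
    rw [div_eq_iff h1mI]; linear_combination Complex.I_sq
  have hdivmI : ((1 : ℂ) - I) / (1 + I) = -I := by
    rw [div_eq_iff h1I]; linear_combination Complex.I_sq
  rcases SDAux.classify hf hR with hid | hcj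
  · left
    constructor
    · intro z hz
      exact ⟨hid _, hid _⟩
    · intro hQ
      have h := (hQ (1 + I) h1I).1
      rw [hconj1I, hdivI, hdivmI, hid] at h
      exact Complex.I_ne_zero (by linear_combination (1/2 : ℂ) * h)
  · right
    constructor
    · intro z hz
      refine ⟨?_, ?_⟩
      · rw [hcj, map_div₀, Complex.conj_conj]
      · rw [hcj, map_pow]
    · intro hP
      have h := (hP (1 + I) h1I).1
      rw [hconj1I, hdivI, hcj, Complex.conj_I] at h
      exact Complex.I_ne_zero (by linear_combination (-1/2 : ℂ) * h)
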